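/- The subgroup of the group of units of the real quaternions generated by u₁ = (1 - k)/√2 and u₂ = (1 - j)/√2 is a finite group of order 48, and the generators satisfy u₂*u₁*u₂ = u₁*u₂*u₁ and u₁² = u₂*u₁²*u₂. -/

import Mathlib

open Quaternion

/-- The imaginary unit `j` of the real quaternions. -/
def quatJ : ℍ[ℝ] := ⟨0, 0, 1, 0⟩

/-- The imaginary unit `k` of the real quaternions. -/
def quatK : ℍ[ℝ] := ⟨0, 0, 0, 1⟩

/-- The unit quaternion `u₁ = (1 - k)/√2`. -/
noncomputable def u₁ : ℍ[ℝ] := (1 - quatK) / ((Real.sqrt 2 : ℝ) : ℍ[ℝ])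

/-- The unit quaternion `u₂ = (1 - j)/√2`. -/
noncomputable def u₂ : ℍ[ℝ] := (1 - quatJ) / ((Real.sqrt 2 : ℝ) : ℍ[ℝ])

/-- The binary octahedral group `2O`: the subgroup of the group of units of the
real quaternions generated by `u₁` and `u₂`. -/
noncomputable def binaryOctahedralGroup : Subgroup ℍ[ℝ]ˣ :=
  Subgroup.closure {x : ℍ[ℝ]ˣ | (x : ℍ[ℝ]) = u₁ ∨ (x : ℍ[ℝ]) = u₂}


/-! ### Auxiliary machinery: an exact integer model of the group ring elements.

Each relevant quaternion is represented as `(p + q*√2)/2` where `p, q` are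
integer quaternions, encoded as a pair of integer 4-tuples. -/

abbrev Z4 := ℤ × ℤ × ℤ × ℤ
abbrev Z8 := Z4 × Z4

def qmul (a b : Z4) : Z4 :=
  (a.1*b.1 - a.2.1*b.2.1 - a.2.2.1*b.2.2.1 - a.2.2.2*b.2.2.2,
   a.1*b.2.1 + a.2.1*b.1 + a.2.2.1*b.2.2.2 - a.2.2.2*b.2.2.1,
   a.1*b.2.2.1 - a.2.1*b.2.2.2 + a.2.2.1*b.1 + a.2.2.2*b.2.1,
   a.1*b.2.2.2 + a.2.1*b.2.2.1 - a.2.2.1*b.2.1 + a.2.2.2*b.1)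
def qadd (a b : Z4) : Z4 := (a.1+b.1, a.2.1+b.2.1, a.2.2.1+b.2.2.1, a.2.2.2+b.2.2.2)
def qdbl (a : Z4) : Z4 := (2*a.1, 2*a.2.1, 2*a.2.2.1, 2*a.2.2.2)
def qconj (a : Z4) : Z4 := (a.1, -a.2.1, -a.2.2.1, -a.2.2.2)
def rawmul (x y : Z8) : Z8 :=
  (qadd (qmul x.1 y.1) (qdbl (qmul x.2 y.2)), qadd (qmul x.1 y.2) (qmul x.2 y.1))
def dbl8 (x : Z8) : Z8 := (qdbl x.1, qdbl x.2)
def pconj (x : Z8) : Z8 := (qconj x.1, qconj x.2)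

noncomputable def A (v : Z4) : ℍ[ℝ] := ⟨(v.1 : ℝ), (v.2.1 : ℝ), (v.2.2.1 : ℝ), (v.2.2.2 : ℝ)⟩

theorem A_mul (v w : Z4) : A (qmul v w) = A v * A w := by
  ext <;> simp only [Quaternion.re_mul, Quaternion.imI_mul, Quaternion.imJ_mul,
    Quaternion.imK_mul] <;> simp only [A, qmul] <;> push_cast <;> ring
theorem A_add (v w : Z4) : A (qadd v w) = A v + A w := by
  ext <;> simp only [Quaternion.re_add, Quaternion.imI_add, Quaternion.imJ_add, Quaternion.imK_add] <;> simp [A, qadd]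
theorem A_dbl (v : Z4) : A (qdbl v) = (2:ℝ) • A v := by
  ext <;> simp only [Quaternion.re_smul, Quaternion.imI_smul, Quaternion.imJ_smul, Quaternion.imK_smul] <;> simp [A, qdbl]
theorem A_conj (v : Z4) : A (qconj v) = star (A v) := by
  ext <;> simp only [Quaternion.re_star, Quaternion.imI_star, Quaternion.imJ_star, Quaternion.imK_star] <;> simp [A, qconj]

noncomputable def σ : ℍ[ℝ] := ((Real.sqrt 2 : ℝ) : ℍ[ℝ])
noncomputable def Φ (x : Z8) : ℍ[ℝ] := (2:ℝ)⁻¹ • (A x.1 + A x.2 * σ)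

theorem sigma_comm (a : ℍ[ℝ]) : a * σ = Real.sqrt 2 • a := Quaternion.mul_coe_eq_smul _ _
theorem sigma_comm' (a : ℍ[ℝ]) : σ * a = Real.sqrt 2 • a := Quaternion.coe_mul_eq_smul _ _
theorem s2 : Real.sqrt 2 * Real.sqrt 2 = 2 := Real.mul_self_sqrt (by norm_num)

theorem phi_mul_of {x y z : Z8} (h : rawmul x y = dbl8 z) : Φ x * Φ y = Φ z := by
  have h1 : qadd (qmul x.1 y.1) (qdbl (qmul x.2 y.2)) = qdbl z.1 := congrArg Prod.fst h
  have h2 : qadd (qmul x.1 y.2) (qmul x.2 y.1) = qdbl z.2 := congrArg Prod.snd h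
  have e1 : A x.1 * A y.1 + (2:ℝ) • (A x.2 * A y.2) = (2:ℝ) • A z.1 := by
    simpa only [A_add, A_mul, A_dbl] using congrArg A h1
  have e2 : A x.1 * A y.2 + A x.2 * A y.1 = (2:ℝ) • A z.2 := by
    simpa only [A_add, A_mul, A_dbl] using congrArg A h2
  have key : (A x.1 + A x.2 * σ) * (A y.1 + A y.2 * σ)
      = (2:ℝ) • (A z.1 + A z.2 * σ) := by
    rw [sigma_comm (A z.2), smul_add, smul_comm (2:ℝ) (Real.sqrt 2), ← e1, ← e2]
    simp only [add_mul, mul_add, sigma_comm, smul_mul_assoc, mul_smul_comm, smul_add, smul_smul]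
    rw [s2]
    module
  rw [Φ, Φ, Φ, smul_mul_smul_comm, key, smul_smul]
  norm_num

theorem phi_conj (x : Z8) : Φ (pconj x) = star (Φ x) := by
  rw [Φ, Φ, pconj, Quaternion.star_smul, star_add, star_mul]
  simp only [A_conj]
  rw [show star σ = σ from Quaternion.star_coe _, sigma_comm', sigma_comm]

def pone : Z8 := ((2,0,0,0),(0,0,0,0))
def U1 : Z8 := ((0,0,0,0),(1,0,0,-1))
def U2 : Z8 := ((0,0,0,0),(1,0,-1,0))
def gen (b : Bool) : Z8 := if b then U2 else U1
def half8 (x : Z8) : Z8 :=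
  ((x.1.1/2, x.1.2.1/2, x.1.2.2.1/2, x.1.2.2.2/2),
   (x.2.1/2, x.2.2.1/2, x.2.2.2.1/2, x.2.2.2.2/2))
def pm (x y : Z8) : Z8 := half8 (rawmul x y)

theorem int_pair_inj {m n m' n' : ℤ} (h : (m:ℝ) + Real.sqrt 2 * n = m' + Real.sqrt 2 * n') :
    m = m' ∧ n = n' := by
  by_cases hn : n = n'
  · subst hn
    have : (m:ℝ) = m' := by linarith
    exact ⟨by exact_mod_cast this, rfl⟩
  · exfalso
    have hnn : ((n':ℝ) - n) ≠ 0 := by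
      intro hc
      have hc2 : (n':ℝ) = n := sub_eq_zero.mp hc
      exact hn (by exact_mod_cast hc2.symm)
    have hs : Real.sqrt 2 = ((m:ℝ) - m') / ((n':ℝ) - n) := by
      field_simp
      linarith
    exact irrational_sqrt_two ⟨((m - m' : ℤ) : ℚ) / ((n' - n : ℤ) : ℚ), by push_cast; rw [hs]⟩

theorem phi_inj : Function.Injective Φ := by
  intro x y h
  have h2 : A x.1 + A x.2 * σ = A y.1 + A y.2 * σ := by
    have := congrArg (fun q => (2:ℝ) • q) h
    simpa only [Φ, smul_smul, mul_inv_cancel₀ (two_ne_zero (α := ℝ)), one_smul] using this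
  rw [sigma_comm, sigma_comm] at h2
  obtain ⟨⟨a,b,c,d⟩,⟨e,f,g,k⟩⟩ := x
  obtain ⟨⟨a',b',c',d'⟩,⟨e',f',g',k'⟩⟩ := y
  have h1 := congrArg QuaternionAlgebra.re h2
  have hI := congrArg QuaternionAlgebra.imI h2
  have hJ := congrArg QuaternionAlgebra.imJ h2
  have hK := congrArg QuaternionAlgebra.imK h2
  simp only [Quaternion.re_add, Quaternion.re_smul, Quaternion.imI_add,
    Quaternion.imI_smul, Quaternion.imJ_add, Quaternion.imJ_smul,
    Quaternion.imK_add, Quaternion.imK_smul] at h1 hI hJ hK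
  simp only [A, smul_eq_mul] at h1 hI hJ hK
  obtain ⟨p1, q1⟩ := int_pair_inj h1
  obtain ⟨p2, q2⟩ := int_pair_inj hI
  obtain ⟨p3, q3⟩ := int_pair_inj hJ
  obtain ⟨p4, q4⟩ := int_pair_inj hK
  simp_all

theorem sigma_ne : σ ≠ 0 := by
  intro h
  have : Real.sqrt 2 = 0 := by exact_mod_cast congrArg QuaternionAlgebra.re h
  exact (Real.sqrt_pos.mpr (by norm_num)).ne' this

theorem sigma_sq : σ * σ = ((2:ℝ) : ℍ[ℝ]) := by rw [σ, ← Quaternion.coe_mul, s2]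

theorem phi_one : Φ pone = 1 := by
  have h2 : A pone.1 = ((2:ℝ) : ℍ[ℝ]) := by ext <;> simp [A, pone]
  have h0 : A pone.2 = 0 := by ext <;> simp [A, pone]
  rw [Φ, h2, h0, zero_mul, add_zero, Quaternion.smul_coe]
  norm_num

theorem phi_U1 : Φ U1 = u₁ := by
  have h0 : A U1.1 = 0 := by ext <;> simp [A, U1]
  have hA : A U1.2 = 1 - quatK := by ext <;> simp <;> simp [A, U1, quatK]
  rw [Φ, h0, hA, zero_add, u₁]
  show (2:ℝ)⁻¹ • ((1 - quatK) * σ) = (1 - quatK) / σ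
  rw [eq_div_iff sigma_ne, smul_mul_assoc, mul_assoc, sigma_sq, Quaternion.mul_coe_eq_smul,
    smul_smul]
  norm_num

theorem phi_U2 : Φ U2 = u₂ := by
  have h0 : A U2.1 = 0 := by ext <;> simp [A, U2]
  have hA : A U2.2 = 1 - quatJ := by ext <;> simp <;> simp [A, U2, quatJ]
  rw [Φ, h0, hA, zero_add, u₂]
  show (2:ℝ)⁻¹ • ((1 - quatJ) * σ) = (1 - quatJ) / σ
  rw [eq_div_iff sigma_ne, smul_mul_assoc, mul_assoc, sigma_sq, Quaternion.mul_coe_eq_smul,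
    smul_smul]
  norm_num

def L48 : List Z8 := [
  ((2,0,0,0),(0,0,0,0)),
  ((0,0,0,0),(1,0,0,-1)),
  ((0,0,0,0),(1,0,-1,0)),
  ((0,0,0,-2),(0,0,0,0)),
  ((1,-1,-1,-1),(0,0,0,0)),
  ((1,1,-1,-1),(0,0,0,0)),
  ((0,0,-2,0),(0,0,0,0)),
  ((0,0,0,0),(-1,0,0,-1)),
  ((0,0,0,0),(0,-1,0,-1)),
  ((0,0,0,0),(0,0,-1,-1)),
  ((0,0,0,0),(0,-1,-1,0)),
  ((0,0,0,0),(0,1,0,-1)),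
  ((0,0,0,0),(0,1,-1,0)),
  ((0,0,0,0),(-1,0,-1,0)),
  ((-2,0,0,0),(0,0,0,0)),
  ((-1,-1,1,-1),(0,0,0,0)),
  ((-1,-1,-1,-1),(0,0,0,0)),
  ((0,-2,0,0),(0,0,0,0)),
  ((-1,1,-1,-1),(0,0,0,0)),
  ((-1,-1,-1,1),(0,0,0,0)),
  ((-1,1,1,-1),(0,0,0,0)),
  ((0,2,0,0),(0,0,0,0)),
  ((-1,1,-1,1),(0,0,0,0)),
  ((0,0,0,0),(-1,0,0,1)),
  ((0,0,0,0),(-1,0,1,0)),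
  ((0,0,0,0),(-1,-1,0,0)),
  ((0,0,0,0),(0,-1,1,0)),
  ((0,0,0,0),(0,-1,0,1)),
  ((0,0,0,0),(-1,1,0,0)),
  ((0,0,0,0),(0,0,-1,1)),
  ((0,0,0,0),(0,0,1,-1)),
  ((0,0,0,0),(0,1,1,0)),
  ((0,0,0,0),(0,1,0,1)),
  ((0,0,0,2),(0,0,0,0)),
  ((-1,1,1,1),(0,0,0,0)),
  ((-1,-1,1,1),(0,0,0,0)),
  ((0,0,2,0),(0,0,0,0)),
  ((1,-1,1,1),(0,0,0,0)),
  ((1,-1,-1,1),(0,0,0,0)),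
  ((1,1,-1,1),(0,0,0,0)),
  ((1,-1,1,-1),(0,0,0,0)),
  ((1,1,1,-1),(0,0,0,0)),
  ((1,1,1,1),(0,0,0,0)),
  ((0,0,0,0),(1,0,0,1)),
  ((0,0,0,0),(0,0,1,1)),
  ((0,0,0,0),(1,0,1,0)),
  ((0,0,0,0),(1,-1,0,0)),
  ((0,0,0,0),(1,1,0,0))]

def Ws : List (List Bool) := [
  [],
  [false],
  [true],
  [false,false],
  [true,false],
  [false,true],
  [true,true],
  [false,false,false],
  [true,false,false],
  [false,true,false],
  [true,true,false],
  [false,false,true],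
  [false,true,true],
  [true,true,true],
  [false,false,false,false],
  [true,false,false,false],
  [false,true,false,false],
  [true,true,false,false],
  [false,false,true,false],
  [true,true,true,false],
  [false,false,false,true],
  [false,false,true,true],
  [false,true,true,true],
  [false,false,false,false,false],
  [true,false,false,false,false],
  [false,true,false,false,false],
  [true,true,false,false,false],
  [true,true,true,false,false],
  [false,false,false,true,false],
  [false,true,true,true,false],
  [true,false,false,false,true],
  [false,false,false,true,true],
  [false,false,true,true,true],
  [false,false,false,false,false,false],
  [true,false,false,false,false,false],
  [false,true,false,false,false,false],
  [true,true,false,false,false,false],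
  [true,true,true,false,false,false],
  [false,true,true,true,false,false],
  [false,false,true,true,true,false],
  [true,true,false,false,false,true],
  [true,false,false,false,true,true],
  [false,false,false,true,true,true],
  [false,false,false,false,false,false,false],
  [false,true,false,false,false,false,false],
  [true,true,true,false,false,false,false],
  [false,true,true,true,false,false,false],
  [false,false,false,true,true,true,false]]


def evalW (w : List Bool) : Z8 := w.foldr (fun b acc => pm acc (gen b)) pone

theorem dNodup : L48.Nodup := by decide
theorem dMem : pone ∈ L48 ∧ U1 ∈ L48 ∧ U2 ∈ L48 := by decide
theorem dInv : ∀ x ∈ L48,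
    rawmul x (pconj x) = dbl8 pone ∧ rawmul (pconj x) x = dbl8 pone := by decide
theorem dStep : ∀ x ∈ L48, ∀ b : Bool,
    rawmul x (gen b) = dbl8 (pm x (gen b)) ∧ pm x (gen b) ∈ L48 := by decide
theorem dLeft : ∀ x ∈ L48, ∀ g ∈ [U1, U2, pconj U1, pconj U2],
    ∃ z ∈ L48, rawmul g x = dbl8 z := by decide
theorem dWords : Ws.map evalW = L48 := by decide
theorem dRel1a : rawmul U2 U1 = dbl8 (pm U2 U1) := by decide
theorem dRel1b : rawmul (pm U2 U1) U2 = dbl8 (pm (pm U2 U1) U2) := by decide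
theorem dRel1c : rawmul U1 U2 = dbl8 (pm U1 U2) := by decide
theorem dRel1d : rawmul (pm U1 U2) U1 = dbl8 (pm (pm U1 U2) U1) := by decide
theorem dRel1e : pm (pm U2 U1) U2 = pm (pm U1 U2) U1 := by decide
theorem dRel2a : rawmul U1 U1 = dbl8 (pm U1 U1) := by decide
theorem dRel2b : rawmul U2 (pm U1 U1) = dbl8 (pm U2 (pm U1 U1)) := by decide
theorem dRel2c : rawmul (pm U2 (pm U1 U1)) U2 = dbl8 (pm (pm U2 (pm U1 U1)) U2) := by decide
theorem dRel2d : pm (pm U2 (pm U1 U1)) U2 = pm U1 U1 := by decide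

theorem unit_val_inv {x : Z8} (hx : x ∈ L48) :
    Φ x * Φ (pconj x) = 1 ∧ Φ (pconj x) * Φ x = 1 :=
  ⟨by rw [phi_mul_of (dInv x hx).1, phi_one], by rw [phi_mul_of (dInv x hx).2, phi_one]⟩

noncomputable def mkUnit (x : Z8) (hx : x ∈ L48) : ℍ[ℝ]ˣ :=
  ⟨Φ x, Φ (pconj x), (unit_val_inv hx).1, (unit_val_inv hx).2⟩

theorem gen_in_G (b : Bool) :
    ∃ z ∈ binaryOctahedralGroup, (z : ℍ[ℝ]) = Φ (gen b) := by
  cases b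
  · refine ⟨mkUnit U1 dMem.2.1, Subgroup.subset_closure (Or.inl ?_), rfl⟩
    show Φ U1 = u₁
    exact phi_U1
  · refine ⟨mkUnit U2 dMem.2.2, Subgroup.subset_closure (Or.inr ?_), rfl⟩
    show Φ U2 = u₂
    exact phi_U2

theorem word_mem : ∀ w : List Bool, evalW w ∈ L48 ∧
    ∃ z ∈ binaryOctahedralGroup, (z : ℍ[ℝ]) = Φ (evalW w) := by
  intro w
  induction w with
  | nil => exact ⟨dMem.1, 1, one_mem _, phi_one.symm⟩
  | cons b w ih =>
    obtain ⟨hx, z, hz, hval⟩ := ih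
    have hst := dStep _ hx b
    obtain ⟨zg, hzg, hvg⟩ := gen_in_G b
    refine ⟨hst.2, z * zg, mul_mem hz hzg, ?_⟩
    show ((z : ℍ[ℝ]) * zg) = Φ (pm (evalW w) (gen b))
    rw [hval, hvg, phi_mul_of hst.1]

theorem u1_inv : u₁⁻¹ = Φ (pconj U1) := by
  rw [← phi_U1]
  exact inv_eq_of_mul_eq_one_right (unit_val_inv dMem.2.1).1

theorem u2_inv : u₂⁻¹ = Φ (pconj U2) := by
  rw [← phi_U2]
  exact inv_eq_of_mul_eq_one_right (unit_val_inv dMem.2.2).1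

theorem closure_sub {z : ℍ[ℝ]ˣ} (hz : z ∈ binaryOctahedralGroup) :
    ∃ x ∈ L48, (z : ℍ[ℝ]) = Φ x := by
  have hz' : z ∈ Submonoid.closure
      ({x : ℍ[ℝ]ˣ | (x : ℍ[ℝ]) = u₁ ∨ (x : ℍ[ℝ]) = u₂} ∪
       {x : ℍ[ℝ]ˣ | (x : ℍ[ℝ]) = u₁ ∨ (x : ℍ[ℝ]) = u₂}⁻¹) := by
    rw [← Subgroup.closure_toSubmonoid]
    exact hz
  obtain ⟨l, hl, hprod⟩ := Submonoid.exists_list_of_mem_closure hz'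
  rw [← hprod]
  clear hprod hz hz' z
  induction l with
  | nil => exact ⟨pone, dMem.1, phi_one.symm⟩
  | cons a l ih =>
    obtain ⟨x, hx, hval⟩ := ih (fun y hy => hl y (List.mem_cons_of_mem a hy))
    have ha := hl a (List.mem_cons_self (a := a) (l := l))
    have hform : ∃ g ∈ [U1, U2, pconj U1, pconj U2], (a : ℍ[ℝ]) = Φ g := by
      rcases ha with h | h
      · rcases h with h | h
        · exact ⟨U1, by simp, h.trans phi_U1.symm⟩
        · exact ⟨U2, by simp, h.trans phi_U2.symm⟩
      · rw [Set.mem_inv] at h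
        rcases h with h | h
        · refine ⟨pconj U1, by simp, ?_⟩
          have hv : ((a : ℍ[ℝ]))⁻¹ = u₁ := by rw [← Units.val_inv_eq_inv_val]; exact h
          rw [← inv_inv (a : ℍ[ℝ]), hv, u1_inv]
        · refine ⟨pconj U2, by simp, ?_⟩
          have hv : ((a : ℍ[ℝ]))⁻¹ = u₂ := by rw [← Units.val_inv_eq_inv_val]; exact h
          rw [← inv_inv (a : ℍ[ℝ]), hv, u2_inv]
    obtain ⟨g, hg, hag⟩ := hform
    obtain ⟨x', hx', hxz⟩ := dLeft x hx g hg
    refine ⟨x', hx', ?_⟩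
    rw [List.prod_cons, Units.val_mul, hval, hag, phi_mul_of hxz]

theorem T_sub {x : Z8} (hx : x ∈ L48) :
    ∃ z ∈ binaryOctahedralGroup, (z : ℍ[ℝ]) = Φ x := by
  have hx' : x ∈ Ws.map evalW := dWords ▸ hx
  obtain ⟨w, _, hw⟩ := List.mem_map.mp hx'
  obtain ⟨_, z, hz, hval⟩ := word_mem w
  exact ⟨z, hz, by rw [hval, hw]⟩

theorem set_eq : (binaryOctahedralGroup : Set ℍ[ℝ]ˣ)
    = {z : ℍ[ℝ]ˣ | ∃ x ∈ L48, (z : ℍ[ℝ]) = Φ x} := by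
  ext z
  constructor
  · exact fun hz => closure_sub hz
  · rintro ⟨x, hx, hval⟩
    obtain ⟨z', hz', hval'⟩ := T_sub hx
    have : z = z' := Units.ext (by rw [hval, hval'])
    rw [this]
    exact hz'

theorem card48 : Nat.card binaryOctahedralGroup = 48 := by
  have e1 : Nat.card binaryOctahedralGroup
      = Nat.card {z : ℍ[ℝ]ˣ | ∃ x ∈ L48, (z : ℍ[ℝ]) = Φ x} :=
    Nat.card_congr (Equiv.setCongr set_eq)
  rw [e1]
  have hbij : Function.Bijective
      (fun p : {x : Z8 // x ∈ L48} =>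
        (⟨mkUnit p.1 p.2, ⟨p.1, p.2, rfl⟩⟩ :
          {z : ℍ[ℝ]ˣ | ∃ x ∈ L48, (z : ℍ[ℝ]) = Φ x})) := by
    constructor
    · intro p q h
      apply Subtype.ext
      apply phi_inj
      exact congrArg (fun t : {z : ℍ[ℝ]ˣ | ∃ x ∈ L48, (z : ℍ[ℝ]) = Φ x} =>
        ((t : ℍ[ℝ]ˣ) : ℍ[ℝ])) h
    · rintro ⟨z, x, hx, hval⟩
      exact ⟨⟨x, hx⟩, Subtype.ext (Units.ext hval.symm)⟩
  rw [← Nat.card_congr (Equiv.ofBijective _ hbij)]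
  have e2 : Nat.card {x : Z8 // x ∈ L48} = Nat.card {x : Z8 // x ∈ L48.toFinset} :=
    Nat.card_congr (Equiv.subtypeEquivRight (fun x => (List.mem_toFinset).symm))
  rw [e2, Nat.card_eq_fintype_card, Fintype.card_coe, List.toFinset_card_of_nodup dNodup]
  rfl

theorem stmt_10 :
    Nat.card binaryOctahedralGroup = 48 ∧
    u₂ * u₁ * u₂ = u₁ * u₂ * u₁ ∧
    u₁ ^ 2 = u₂ * u₁ ^ 2 * u₂ := by
  refine ⟨card48, ?_, ?_⟩
  · rw [← phi_U1, ← phi_U2, phi_mul_of dRel1a, phi_mul_of dRel1b,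
      phi_mul_of dRel1c, phi_mul_of dRel1d, dRel1e]
  · rw [pow_two, ← phi_U1, ← phi_U2, phi_mul_of dRel2a, phi_mul_of dRel2b,
      phi_mul_of dRel2c, dRel2d]
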